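/- The averaged operator H̃ defined by H̃ x := ∫_G u(g)(H(u(g)⁻¹ x)) dμ(g) satisfies H̃ ψ = 0, and Re⟨φ, H̃ φ⟩ ≥ J·‖φ‖² for every φ ∈ V orthogonal to ψ. (This is the compact-group version of the symmetrization argument of Appendix B, with the group average taken with respect to the Haar measure.) -/

import Mathlib

open MeasureTheory

private lemma cont_integrable {G : Type*} [TopologicalSpace G] [CompactSpace G]
    [MeasurableSpace G] [BorelSpace G] (μ : Measure G) [IsProbabilityMeasure μ]
    {E : Type*} [NormedAddCommGroup E] {f : G → E} (hf : Continuous f) :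
    Integrable f μ := by
  have := hf.continuousOn.integrableOn_compact' isCompact_univ MeasurableSet.univ (μ := μ)
  rwa [integrableOn_univ] at this

/-- the Haar-averaged Hamiltonian
`H̃ x = ∫_G u(g)(H(u(g)⁻¹ x)) dμ(g)` over a compact group `G` of linear isometric
equivalences fixing the gapped ground state `ψ` again annihilates `ψ` and has
spectral gap at least `J` above it (compact-group version of Appendix B). -/
theorem symmetrized_hamiltonian_gapped_compact_group
    {V : Type*} [NormedAddCommGroup V] [InnerProductSpace ℂ V]
    [FiniteDimensional ℂ V]
    (ψ : V) (hψ : ‖ψ‖ = 1) (J : ℝ) (hJ : 0 ≤ J)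
    (H : V →ₗ[ℂ] V) (hHψ : H ψ = 0)
    (hgap : ∀ φ : V, (inner ℂ φ ψ : ℂ) = 0 → J * ‖φ‖ ^ 2 ≤ (inner ℂ φ (H φ) : ℂ).re)
    {G : Type*} [Group G] [TopologicalSpace G] [IsTopologicalGroup G] [CompactSpace G]
    [MeasurableSpace G] [BorelSpace G]
    (μ : Measure G) [μ.IsHaarMeasure] [IsProbabilityMeasure μ]
    (u : G → (V ≃ₗᵢ[ℂ] V)) (hu : ∀ g : G, u g ψ = ψ)
    (hcont : ∀ x : V, Continuous fun g : G => u g x)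
    (Ht : V → V)
    (hHt : ∀ x : V, Ht x = ∫ g : G, u g (H ((u g).symm x)) ∂μ) :
    Ht ψ = 0 ∧
      ∀ φ : V, (inner ℂ φ ψ : ℂ) = 0 → J * ‖φ‖ ^ 2 ≤ (inner ℂ φ (Ht φ) : ℂ).re := by
  have hsymmψ : ∀ g : G, (u g).symm ψ = ψ := by
    intro g
    conv_lhs => rw [← hu g]
    exact (u g).symm_apply_apply ψ
  -- operator-valued continuity
  set T : G → (V →L[ℂ] V) := fun g =>
    ((u g).toLinearEquiv.toLinearMap).toContinuousLinearMap with hT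
  have hTcont : Continuous T := by
    rw [continuous_clm_apply]
    intro y
    exact hcont y
  have hTunit : ∀ g : G, IsUnit (T g) := by
    intro g
    refine ⟨⟨T g, ((u g).symm.toLinearEquiv.toLinearMap).toContinuousLinearMap, ?_, ?_⟩, rfl⟩
    · ext x; exact (u g).apply_symm_apply x
    · ext x; exact (u g).symm_apply_apply x
  have hTinv : ∀ g : G, Ring.inverse (T g) = ((u g).symm.toLinearEquiv.toLinearMap).toContinuousLinearMap := by
    intro g
    obtain ⟨w, hw⟩ := hTunit g
    rw [← hw, Ring.inverse_unit]
    have : (w : V →L[ℂ] V) * ((u g).symm.toLinearEquiv.toLinearMap).toContinuousLinearMap = 1 := by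
      rw [hw]; ext x; exact (u g).apply_symm_apply x
    calc (↑w⁻¹ : V →L[ℂ] V) = ↑w⁻¹ * (↑w * _) := by rw [this, mul_one]
      _ = _ := by rw [← mul_assoc, Units.inv_mul, one_mul]
  have hsymmcont : ∀ x : V, Continuous fun g : G => (u g).symm x := by
    intro x
    have h1 : Continuous fun g : G => Ring.inverse (T g) := by
      rw [continuous_iff_continuousAt]
      intro g
      have h := NormedRing.inverse_continuousAt (hTunit g).unit
      rw [(hTunit g).unit_spec] at h
      exact h.comp hTcont.continuousAt
    have := h1.clm_apply continuous_const (g := fun _ : G => x)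
    simpa [hTinv] using this
  have Hc : Continuous fun x : V => H x := H.continuous_of_finiteDimensional
  have hFc : ∀ x : V, Continuous fun g : G => u g (H ((u g).symm x)) := by
    intro x
    have h2 : Continuous fun g : G => H ((u g).symm x) := Hc.comp (hsymmcont x)
    have := hTcont.clm_apply h2
    simpa [hT] using this
  constructor
  · rw [hHt]
    simp [hsymmψ, hHψ]
  · intro φ hφ
    have hInt : Integrable (fun g : G => u g (H ((u g).symm φ))) μ :=
      cont_integrable μ (hFc φ)
    rw [hHt, ← integral_inner hInt φ]
    have hIc : Continuous fun g : G => (inner ℂ φ (u g (H ((u g).symm φ))) : ℂ) :=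
      continuous_const.inner (hFc φ)
    have hIint : Integrable (fun g : G => (inner ℂ φ (u g (H ((u g).symm φ))) : ℂ)) μ :=
      cont_integrable μ hIc
    rw [← RCLike.re_to_complex, ← integral_re hIint]
    simp only [RCLike.re_to_complex]
    have key : ∀ g : G, J * ‖φ‖ ^ 2 ≤ (inner ℂ φ (u g (H ((u g).symm φ))) : ℂ).re := by
      intro g
      have h1 : (inner ℂ φ (u g (H ((u g).symm φ))) : ℂ)
          = inner ℂ ((u g).symm φ) (H ((u g).symm φ)) := by
        rw [← (u g).inner_map_map ((u g).symm φ) (H ((u g).symm φ)), (u g).apply_symm_apply]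
      have h2 : (inner ℂ ((u g).symm φ) ψ : ℂ) = 0 := by
        rw [← hsymmψ g, (u g).symm.inner_map_map, hφ]
      have h3 := hgap ((u g).symm φ) h2
      rw [h1]
      rwa [(u g).symm.norm_map φ] at h3
    calc J * ‖φ‖ ^ 2 = ∫ _ : G, J * ‖φ‖ ^ 2 ∂μ := by
          simp [integral_const, measure_univ]
      _ ≤ _ := by
          apply integral_mono (integrable_const _) _ key
          exact cont_integrable μ (Complex.continuous_re.comp hIc)
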